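/- arXiv:1307.4277 — 2 statements merged into one kernel-verified Lean document; each statement's English description precedes it below -/
import Mathlib

section
/- Let ε > 0, let a be a positive real number with a ≠ 1, and let f : ℝ → ℝ be a function satisfying |f(x + y) − f(x) − f(y)| ≤ ε for all x, y ∈ ℝ, and such that the mapping x ↦ f(aˣ) − aˣ·ln(a)·f(x) is locally bounded on ℝ. Then there exist a real number λ and a real derivation χ : ℝ → ℝ such that |f(x) − (χ(x) + λ·x)| ≤ ε for all x ∈ ℝ. -/
open Real Set

/-- A function `φ` is locally bounded on a set `s` if every point of `s` has a
neighborhood (within `s`) on which `φ` is bounded. -/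
def LocallyBoundedOn (φ : ℝ → ℝ) (s : Set ℝ) : Prop :=
  ∀ x ∈ s, ∃ C : ℝ, ∀ᶠ y in nhdsWithin x s, |φ y| ≤ C

/-- A real-valued function is *regular* on its domain `s` if it is locally bounded,
or continuous, or Lebesgue measurable on `s`. -/
def RegularOn (φ : ℝ → ℝ) (s : Set ℝ) : Prop :=
  LocallyBoundedOn φ s ∨ ContinuousOn φ s ∨ Measurable (s.restrict φ)

/-- A real derivation: an additive function satisfying the Leibniz rule. -/
def IsRealDerivation (χ : ℝ → ℝ) : Prop :=
  (∀ x y : ℝ, χ (x + y) = χ x + χ y) ∧ (∀ x y : ℝ, χ (x * y) = x * χ y + y * χ x)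

open Filter

lemma hyers {ε : ℝ} (f : ℝ → ℝ) (hf : ∀ x y : ℝ, |f (x + y) - f x - f y| ≤ ε) :
    ∃ A : ℝ → ℝ, (∀ x y, A (x + y) = A x + A y) ∧ ∀ x, |f x - A x| ≤ ε := by
  set u : ℕ → ℝ → ℝ := fun n x => f (2 ^ n * x) / 2 ^ n with hu
  have key : ∀ (x : ℝ) (n : ℕ), dist (u n x) (u (n + 1) x) ≤ ε / 2 / 2 ^ n := by
    intro x n
    have h := hf (2 ^ n * x) (2 ^ n * x)
    have h2 : (2 : ℝ) ^ n * x + 2 ^ n * x = 2 ^ (n + 1) * x := by ring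
    rw [h2] at h
    have hpos : (0 : ℝ) < 2 ^ (n + 1) := by positivity
    have heq : u n x - u (n + 1) x =
        -(f (2 ^ (n + 1) * x) - f (2 ^ n * x) - f (2 ^ n * x)) / 2 ^ (n + 1) := by
      simp only [hu]
      field_simp
      ring
    rw [Real.dist_eq, heq, abs_div, abs_neg, abs_of_pos hpos]
    rw [div_le_iff₀ hpos]
    have heq2 : ε / 2 / 2 ^ n * 2 ^ (n + 1) = ε := by
      rw [pow_succ]; field_simp
    rw [heq2]
    exact h
  have cau : ∀ x, CauchySeq (fun n => u n x) := fun x =>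
    cauchySeq_of_le_geometric_two (key x)
  choose A hA using fun x => cauchySeq_tendsto_of_complete (cau x)
  have hclose : ∀ x, |f x - A x| ≤ ε := by
    intro x
    have := dist_le_of_le_geometric_two_of_tendsto₀ (key x) (hA x)
    simpa [hu, Real.dist_eq] using this
  refine ⟨A, ?_, hclose⟩
  intro x y
  have h1 : Tendsto (fun n => u n (x + y) - u n x - u n y) atTop
      (nhds (A (x + y) - A x - A y)) := ((hA (x + y)).sub (hA x)).sub (hA y)
  have h2 : ∀ n, |u n (x + y) - u n x - u n y| ≤ ε * (1 / 2) ^ n := by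
    intro n
    have h := hf (2 ^ n * x) (2 ^ n * y)
    have h2' : (2 : ℝ) ^ n * x + 2 ^ n * y = 2 ^ n * (x + y) := by ring
    rw [h2'] at h
    have hpos : (0 : ℝ) < 2 ^ n := by positivity
    have heq : u n (x + y) - u n x - u n y =
        (f (2 ^ n * (x + y)) - f (2 ^ n * x) - f (2 ^ n * y)) / 2 ^ n := by
      simp only [hu]; field_simp
    rw [heq, abs_div, abs_of_pos hpos, div_le_iff₀ hpos]
    calc |f (2 ^ n * (x + y)) - f (2 ^ n * x) - f (2 ^ n * y)| ≤ ε := h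
      _ = ε * (1 / 2) ^ n * 2 ^ n := by
          rw [div_pow, one_pow, mul_assoc, div_mul_cancel₀]
          · ring
          · positivity
  have h3 : Tendsto (fun n : ℕ => ε * (1 / 2 : ℝ) ^ n) atTop (nhds 0) := by
    have := tendsto_pow_atTop_nhds_zero_of_lt_one (show (0:ℝ) ≤ 1/2 by norm_num)
      (show (1/2 : ℝ) < 1 by norm_num)
    simpa using this.const_mul ε
  have habs : Tendsto (fun n => |u n (x + y) - u n x - u n y|) atTop
      (nhds |A (x + y) - A x - A y|) := h1.abs
  have hle := le_of_tendsto_of_tendsto' habs h3 h2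
  have hz : A (x + y) - A x - A y = 0 :=
    abs_eq_zero.mp (le_antisymm hle (abs_nonneg _))
  linarith

lemma additive_linear (g : ℝ → ℝ) (hg : ∀ x y, g (x + y) = g x + g y)
    {p q M : ℝ} (hpq : p < q) (hM : ∀ x ∈ Icc p q, |g x| ≤ M) :
    ∀ x, g x = g 1 * x := by
  set G : ℝ →+ ℝ := AddMonoidHom.mk' g hg with hG
  have hrat : ∀ r : ℚ, g (r : ℝ) = (r : ℝ) * g 1 := by
    intro r
    have h := (AddMonoidHom.toRatLinearMap G).map_smul r (1 : ℝ)
    simp only [AddMonoidHom.coe_toRatLinearMap, Rat.smul_def, mul_one] at h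
    simpa [hG] using h
  set h : ℝ → ℝ := fun x => g x - g 1 * x with hh
  have hhadd : ∀ x y, h (x + y) = h x + h y := by
    intro x y; simp only [hh, hg]; ring
  have hhr : ∀ r : ℚ, h (r : ℝ) = 0 := by
    intro r; simp only [hh, hrat]; ring
  set M' : ℝ := M + |g 1| * (|p| + |q|) with hM'
  have hbdI : ∀ x ∈ Icc p q, |h x| ≤ M' := by
    intro x hx
    have h1 : |g x| ≤ M := hM x hx
    have h2 : |x| ≤ |p| + |q| :=
      le_trans (abs_le_max_abs_abs hx.1 hx.2)
        (max_le_add_of_nonneg (abs_nonneg _) (abs_nonneg _))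
    calc |h x| = |g x - g 1 * x| := rfl
      _ ≤ |g x| + |g 1 * x| := abs_sub _ _
      _ = |g x| + |g 1| * |x| := by rw [abs_mul]
      _ ≤ M + |g 1| * (|p| + |q|) := by gcongr
  have hbd : ∀ x, |h x| ≤ M' := by
    intro x
    obtain ⟨r, hr1, hr2⟩ := exists_rat_btwn (show x - q < x - p by linarith)
    have hmem : x - r ∈ Icc p q := ⟨by linarith, by linarith⟩
    have heq : h x = h (x - r) + h (r : ℝ) := by
      rw [← hhadd]; ring_nf
    rw [heq, hhr, add_zero]
    exact hbdI _ hmem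
  have hnat : ∀ (n : ℕ) (x : ℝ), h ((n : ℝ) * x) = (n : ℝ) * h x := by
    intro n x
    induction n with
    | zero =>
        simp only [Nat.cast_zero, zero_mul]
        have h0 := hhadd 0 0
        simp only [add_zero] at h0
        linarith
    | succ k ih => push_cast; rw [add_mul, one_mul, hhadd, ih]; ring
  have hzero : ∀ x, h x = 0 := by
    intro x
    by_contra hne
    have hpos : 0 < |h x| := abs_pos.mpr hne
    obtain ⟨n, hn⟩ := exists_nat_gt (M' / |h x|)
    have h1 : (n : ℝ) * |h x| ≤ M' := by
      have hb := hbd ((n : ℝ) * x)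
      rwa [hnat, abs_mul, abs_of_nonneg (Nat.cast_nonneg n)] at hb
    have h2 : M' < (n : ℝ) * |h x| := by
      rw [div_lt_iff₀ hpos] at hn; linarith
    linarith
  intro x
  have hx := hzero x
  simp only [hh] at hx
  linarith

lemma biadditive_linear (D : ℝ → ℝ → ℝ)
    (hadd : ∀ s t u, D s (t + u) = D s t + D s u)
    (hsym : ∀ s t, D s t = D t s)
    {p q M : ℝ} (hp : 0 < p) (hpq : p < q)
    (hM : ∀ s ∈ Icc p q, ∀ t ∈ Icc p q, |D s t| ≤ M) :
    ∀ s t, D s t = D 1 1 * s * t := by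
  have haddL : ∀ t x y, D (x + y) t = D x t + D y t := by
    intro t x y; rw [hsym, hadd, hsym t x, hsym t y]
  have step1 : ∀ t ∈ Icc p q, ∀ s, D s t = D 1 t * s := by
    intro t ht s
    exact additive_linear (fun s => D s t) (haddL t) hpq (fun x hx => hM x hx t ht) s
  obtain ⟨r, hr1, hr2⟩ := exists_rat_btwn hpq
  have hrpos : (0 : ℝ) < (r : ℝ) := lt_trans hp hr1
  have hrIcc : (r : ℝ) ∈ Icc p q := ⟨le_of_lt hr1, le_of_lt hr2⟩
  have step2 : ∀ t, D 1 t = D 1 1 * t := by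
    refine additive_linear (fun t => D 1 t) (hadd 1) (M := M / r) hpq ?_
    intro t ht
    have h1 : D (r : ℝ) t = D 1 t * r := step1 t ht (r : ℝ)
    have h2 : |D (r : ℝ) t| ≤ M := hM _ hrIcc t ht
    rw [h1, abs_mul, abs_of_pos hrpos] at h2
    exact (le_div_iff₀ hrpos).mpr h2
  intro s t
  have hbd : ∀ t' ∈ Icc p q, |D s t'| ≤ |D 1 1| * q * |s| := by
    intro t' ht'
    rw [step1 t' ht' s, step2 t', abs_mul, abs_mul]
    have ht'pos : 0 < t' := lt_of_lt_of_le hp ht'.1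
    rw [abs_of_pos ht'pos]
    have hle : t' ≤ q := ht'.2
    gcongr
  have hlin0 := additive_linear (fun t' => D s t') (hadd s) hpq hbd
  have hlin : ∀ t', D s t' = D s 1 * t' := fun t' => by simpa using hlin0 t'
  have h1 : D s (r : ℝ) = D s 1 * r := hlin (r : ℝ)
  have h2 : D s (r : ℝ) = D 1 1 * (r : ℝ) * s := by
    rw [step1 (r : ℝ) hrIcc s, step2 (r : ℝ)]
  have h3 : D s 1 * (r : ℝ) = (D 1 1 * s) * (r : ℝ) := by rw [← h1, h2]; ring
  have h4 := mul_right_cancel₀ (ne_of_gt hrpos) h3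
  rw [hlin t, h4]

theorem stmt_12 (ε : ℝ) (hε : 0 < ε) (a : ℝ) (ha : 0 < a) (ha1 : a ≠ 1)
    (f : ℝ → ℝ)
    (hf : ∀ x y : ℝ, |f (x + y) - f x - f y| ≤ ε)
    (hlb : LocallyBoundedOn (fun x : ℝ => f (a ^ x) - a ^ x * Real.log a * f x) Set.univ) :
    ∃ (l : ℝ) (χ : ℝ → ℝ), IsRealDerivation χ ∧
      ∀ x : ℝ, |f x - (χ x + l * x)| ≤ ε := by
  obtain ⟨A, hAadd, hAcl⟩ := hyers f hf
  set c := Real.log a with hc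
  have hc0 : c ≠ 0 := Real.log_ne_zero_of_pos_of_ne_one ha ha1
  have hcabs : 0 < |c| := abs_pos.mpr hc0
  -- local bound at 0
  obtain ⟨C, hC⟩ := hlb 0 (mem_univ 0)
  rw [nhdsWithin_univ, Metric.eventually_nhds_iff] at hC
  obtain ⟨δ, hδ, hCb⟩ := hC
  -- bound for H
  set E := Real.exp (|c| * δ) with hE
  have hEpos : 0 < E := Real.exp_pos _
  have hax : ∀ x : ℝ, |x| < δ → a ^ x ≤ E := by
    intro x hx
    rw [Real.rpow_def_of_pos ha x, hE]
    apply Real.exp_le_exp.mpr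
    calc c * x ≤ |c * x| := le_abs_self _
      _ = |c| * |x| := abs_mul _ _
      _ ≤ |c| * δ := by
          apply mul_le_mul_of_nonneg_left (le_of_lt hx) (abs_nonneg _)
  set H : ℝ → ℝ := fun x => A (a ^ x) - a ^ x * c * A x with hH
  set C1 := C + (1 + E * |c|) * ε with hC1
  have hHbd : ∀ x : ℝ, |x| < δ → |H x| ≤ C1 := by
    intro x hx
    have hB : |f (a ^ x) - a ^ x * c * f x| ≤ C := by
      have := hCb (y := x) (by simpa [Real.dist_eq] using hx)
      simpa using this
    have h1 : |f (a ^ x) - A (a ^ x)| ≤ ε := hAcl _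
    have h2 : |f x - A x| ≤ ε := hAcl _
    have haxpos : 0 < a ^ x := Real.rpow_pos_of_pos ha x
    have haxE : a ^ x ≤ E := hax x hx
    have key : H x = (f (a ^ x) - a ^ x * c * f x)
        - (f (a ^ x) - A (a ^ x)) + a ^ x * c * (f x - A x) := by
      simp only [hH]; ring
    rw [key]
    calc |(f (a ^ x) - a ^ x * c * f x) - (f (a ^ x) - A (a ^ x))
          + a ^ x * c * (f x - A x)|
        ≤ |(f (a ^ x) - a ^ x * c * f x) - (f (a ^ x) - A (a ^ x))|
          + |a ^ x * c * (f x - A x)| := abs_add_le _ _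
      _ ≤ (|f (a ^ x) - a ^ x * c * f x| + |f (a ^ x) - A (a ^ x)|)
          + |a ^ x * c| * |f x - A x| := by
            rw [abs_mul]; gcongr; exact abs_sub _ _
      _ ≤ (C + ε) + (E * |c|) * ε := by
            gcongr
            rw [abs_mul, abs_of_pos haxpos]
            apply mul_le_mul_of_nonneg_right haxE (abs_nonneg _)
      _ = C1 := by rw [hC1]; ring
  set D : ℝ → ℝ → ℝ := fun s t => A (s * t) - s * A t - t * A s with hD
  have hDkey : ∀ x y : ℝ, D (a ^ x) (a ^ y) = H (x + y) - a ^ y * H x - a ^ x * H y := by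
    intro x y
    have hmul : a ^ (x + y) = a ^ x * a ^ y := Real.rpow_add ha x y
    simp only [hD, hH, hmul, hAadd]
    ring
  have hC1nn : 0 ≤ C1 := le_trans (abs_nonneg _) (hHbd 0 (by simpa using hδ))
  set M := C1 * (1 + 2 * E) with hM
  have hDb : ∀ x y : ℝ, |x| < δ / 2 → |y| < δ / 2 → |D (a ^ x) (a ^ y)| ≤ M := by
    intro x y hx hy
    have hxy : |x + y| < δ := lt_of_le_of_lt (abs_add_le _ _) (by linarith)
    have hx' : |x| < δ := by linarith [hx]
    have hy' : |y| < δ := by linarith [hy]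
    have h1 := hHbd (x + y) hxy
    have h2 := hHbd x hx'
    have h3 := hHbd y hy'
    have hE1 : a ^ x ≤ E := hax x hx'
    have hE2 : a ^ y ≤ E := hax y hy'
    have hp1 : 0 < a ^ x := Real.rpow_pos_of_pos ha x
    have hp2 : 0 < a ^ y := Real.rpow_pos_of_pos ha y
    rw [hDkey]
    calc |H (x + y) - a ^ y * H x - a ^ x * H y|
        ≤ |H (x + y)| + |a ^ y * H x| + |a ^ x * H y| := by
          calc |H (x + y) - a ^ y * H x - a ^ x * H y|
              ≤ |H (x + y) - a ^ y * H x| + |a ^ x * H y| := abs_sub _ _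
            _ ≤ |H (x + y)| + |a ^ y * H x| + |a ^ x * H y| := by
                gcongr
                exact abs_sub _ _
      _ ≤ C1 + E * C1 + E * C1 := by
          rw [abs_mul, abs_mul, abs_of_pos hp1, abs_of_pos hp2]
          have n1 := abs_nonneg (H x); have n2 := abs_nonneg (H y)
          have b1 := hE1; have b2 := hE2
          nlinarith [h1, h2, h3, mul_nonneg (le_of_lt hp1) n2, mul_nonneg (le_of_lt hp2) n1]
      _ = M := by rw [hM]; ring
  set p := Real.exp (-(|c| * δ / 4)) with hp
  set q := Real.exp (|c| * δ / 4) with hq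
  have hppos : 0 < p := Real.exp_pos _
  have hpq : p < q := by
    apply Real.exp_lt_exp.mpr
    have : 0 < |c| * δ / 4 := by positivity
    linarith
  have hsurj : ∀ s ∈ Icc p q, ∃ x : ℝ, |x| < δ / 2 ∧ a ^ x = s := by
    intro s hs
    have hs0 : 0 < s := lt_of_lt_of_le hppos hs.1
    refine ⟨Real.log s / c, ?_, ?_⟩
    · have hu1 : -(|c| * δ / 4) ≤ Real.log s := by
        have := hs.1
        rw [hp, ← Real.exp_log hs0] at this
        exact Real.exp_le_exp.mp this
      have hu2 : Real.log s ≤ |c| * δ / 4 := by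
        have := hs.2
        rw [hq] at this
        conv_lhs at this => rw [← Real.exp_log hs0]
        exact Real.exp_le_exp.mp this
      have habs : |Real.log s| ≤ |c| * δ / 4 := abs_le.mpr ⟨hu1, hu2⟩
      rw [abs_div, div_lt_iff₀ hcabs]
      nlinarith
    · rw [Real.rpow_def_of_pos ha, mul_div_cancel₀ _ hc0, Real.exp_log hs0]
  have hDbd : ∀ s ∈ Icc p q, ∀ t ∈ Icc p q, |D s t| ≤ M := by
    intro s hs t ht
    obtain ⟨x, hx, hxs⟩ := hsurj s hs
    obtain ⟨y, hy, hyt⟩ := hsurj t ht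
    rw [← hxs, ← hyt]
    exact hDb x y hx hy
  have hDadd : ∀ s t u, D s (t + u) = D s t + D s u := by
    intro s t u
    simp only [hD, mul_add, hAadd]
    ring
  have hDsym : ∀ s t, D s t = D t s := by
    intro s t; simp only [hD, mul_comm]; ring
  have hDall := biadditive_linear D hDadd hDsym hppos hpq hDbd
  have hD11 : D 1 1 = -A 1 := by simp only [hD, mul_one, one_mul]; ring
  refine ⟨A 1, fun x => A x - A 1 * x, ⟨?_, ?_⟩, ?_⟩
  · intro x y
    show A (x + y) - A 1 * (x + y) = (A x - A 1 * x) + (A y - A 1 * y)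
    rw [hAadd]; ring
  · intro x y
    have hxy := hDall x y
    rw [hD11] at hxy
    simp only [hD] at hxy
    show A (x * y) - A 1 * (x * y) = x * (A y - A 1 * y) + y * (A x - A 1 * x)
    linear_combination hxy
  · intro x
    have : f x - (A x - A 1 * x + A 1 * x) = f x - A x := by ring
    rw [this]
    exact hAcl x
end

section
/- Let ε > 0 and let f : ℝ → ℝ be a function satisfying |f(x + y) − f(x) − f(y)| ≤ ε for all x, y ∈ ℝ, and such that the mapping x ↦ f(sinh(x)) − cosh(x)·f(x) is locally bounded on ℝ. Then there exist a real number λ and a real derivation χ : ℝ → ℝ such that |f(x) − (χ(x) + λ·x)| ≤ ε for all x ∈ ℝ. -/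
open Real Set

open Filter

/-- An additive function vanishing at 1 and bounded near 0 is identically 0. -/
lemma aux_zero_of_addHom (E : ℝ →+ ℝ) (h1 : E 1 = 0) (δ C : ℝ) (hδ : 0 < δ)
    (hbd : ∀ u : ℝ, |u| < δ → |E u| ≤ C) : ∀ x, E x = 0 := by
  have hq : ∀ q : ℚ, E (q : ℝ) = 0 := by
    intro q
    have := map_rat_smul E q (1 : ℝ)
    simpa [Rat.smul_def, h1] using this
  have hbd' : ∀ x : ℝ, |E x| ≤ C := by
    intro x
    obtain ⟨q, hq1, hq2⟩ := exists_rat_btwn (show x - δ < x by linarith)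
    have hx : E x = E (x - q) + E (q : ℝ) := by
      rw [← map_add]; ring_nf
    have habs : |x - (q : ℝ)| < δ := by
      rw [abs_lt]; constructor <;> linarith
    calc |E x| = |E (x - q)| := by rw [hx, hq q, add_zero]
      _ ≤ C := hbd _ habs
  intro x
  by_contra h
  have hpos : 0 < |E x| := abs_pos.mpr h
  obtain ⟨n, hn⟩ := exists_nat_gt (C / |E x|)
  have hnx : E ((n : ℝ) * x) = n * E x := by
    have := map_nsmul E n x
    simpa [nsmul_eq_mul] using this
  have : (n : ℝ) * |E x| ≤ C := by
    calc (n : ℝ) * |E x| = |E ((n : ℝ) * x)| := by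
          rw [hnx, abs_mul, Nat.abs_cast]
      _ ≤ C := hbd' _
  nlinarith [div_lt_iff₀ hpos |>.mp hn]

/-- An additive function within bounded distance of a linear map near 0 is linear. -/
lemma aux_additive_linear_of_bdd (D : ℝ → ℝ) (hD : ∀ x y, D (x + y) = D x + D y)
    (m C δ : ℝ) (hδ : 0 < δ) (hbd : ∀ u : ℝ, |u| < δ → |D u - m * u| ≤ C) :
    ∀ u, D u = D 1 * u := by
  set E : ℝ →+ ℝ := AddMonoidHom.mk' (fun u => D u - D 1 * u)
    (by intro a b; simp only [hD]; ring) with hE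
  have h1 : E 1 = 0 := by simp [hE]
  have key : ∀ x, E x = 0 := by
    apply aux_zero_of_addHom E h1 δ (C + |m - D 1| * δ) hδ
    intro u hu
    have : E u = (D u - m * u) + (m - D 1) * u := by simp [hE]; ring
    rw [this]
    calc |(D u - m * u) + (m - D 1) * u| ≤ |D u - m * u| + |(m - D 1) * u| := abs_add_le _ _
      _ ≤ C + |m - D 1| * δ := by
          gcongr
          · exact hbd u hu
          · rw [abs_mul]
            have := abs_nonneg (m - D 1)
            nlinarith [hu.le]
  intro u
  have := key u
  simp [hE] at this
  linarith

/-- Hyers' theorem: an approximately additive function is uniformly close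
to an additive function. -/
lemma aux_hyers (ε : ℝ) (f : ℝ → ℝ) (hf : ∀ x y : ℝ, |f (x + y) - f x - f y| ≤ ε) :
    ∃ A : ℝ → ℝ, (∀ x y, A (x + y) = A x + A y) ∧ ∀ x, |f x - A x| ≤ ε := by
  set a : ℝ → ℕ → ℝ := fun x n => f (2 ^ n * x) / 2 ^ n with ha
  have hstep : ∀ (x : ℝ) (n : ℕ), dist (a x n) (a x (n + 1)) ≤ ε / 2 / 2 ^ n := by
    intro x n
    have key := hf (2 ^ n * x) (2 ^ n * x)
    have e1 : (2:ℝ) ^ (n+1) * x = 2 ^ n * x + 2 ^ n * x := by ring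
    rw [Real.dist_eq]
    have h : a x n - a x (n + 1) =
        -(f (2 ^ n * x + 2 ^ n * x) - f (2 ^ n * x) - f (2 ^ n * x)) / 2 ^ (n + 1) := by
      simp only [ha, e1]
      field_simp
      ring
    rw [h, abs_div, abs_neg, abs_of_nonneg (by positivity : (0:ℝ) ≤ (2:ℝ) ^ (n+1)),
      div_le_iff₀ (by positivity : (0:ℝ) < (2:ℝ) ^ (n+1))]
    have e2 : ε / 2 / 2 ^ n * 2 ^ (n + 1) = ε := by
      rw [pow_succ]
      field_simp
    rw [e2]; exact key
  have hlim : ∀ x : ℝ, ∃ L : ℝ, Tendsto (a x) atTop (nhds L) := fun x =>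
    cauchySeq_tendsto_of_complete (cauchySeq_of_le_geometric_two (C := ε) (hstep x))
  choose A hA using hlim
  refine ⟨A, ?_, ?_⟩
  · intro x y
    have h1 : Tendsto (fun n => a (x + y) n - a x n - a y n) atTop
        (nhds (A (x + y) - A x - A y)) := ((hA (x + y)).sub (hA x)).sub (hA y)
    have h2 : Tendsto (fun n => a (x + y) n - a x n - a y n) atTop (nhds 0) := by
      apply squeeze_zero_norm (a := fun n : ℕ => ε / 2 ^ n)
      · intro n
        have e : a (x + y) n - a x n - a y n =
            (f (2 ^ n * x + 2 ^ n * y) - f (2 ^ n * x) - f (2 ^ n * y)) / 2 ^ n := by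
          simp only [ha]
          rw [show (2:ℝ) ^ n * (x + y) = 2 ^ n * x + 2 ^ n * y by ring]
          field_simp
        rw [Real.norm_eq_abs, e, abs_div,
          abs_of_nonneg (by positivity : (0:ℝ) ≤ (2:ℝ) ^ n)]
        gcongr
        exact hf _ _
      · have := tendsto_pow_atTop_nhds_zero_of_lt_one
          (by norm_num : (0:ℝ) ≤ 1/2) (by norm_num : (1:ℝ)/2 < 1)
        have h3 : Tendsto (fun n : ℕ => ε * (1/2) ^ n) atTop (nhds (ε * 0)) :=
          this.const_mul ε
        simpa [div_eq_mul_inv, inv_pow] using h3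
    have := tendsto_nhds_unique h1 h2
    linarith
  · intro x
    have hb := dist_le_of_le_geometric_two_of_tendsto₀ (hstep x) (hA x)
    have e0 : a x 0 = f x := by simp [ha]
    rw [e0, Real.dist_eq] at hb
    exact hb

/-- The hyperbolic cosine attains every value `v > 1`. -/
lemma aux_exists_cosh_eq {v : ℝ} (hv : 1 < v) : ∃ y : ℝ, Real.cosh y = v := by
  have h2 : v ≤ Real.cosh v := by
    have hs : v ≤ Real.sinh v := Real.self_le_sinh_iff.mpr (by linarith)
    nlinarith [Real.sinh_lt_cosh v]
  have hmem : v ∈ Icc (Real.cosh 0) (Real.cosh v) := by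
    rw [Real.cosh_zero]; exact ⟨by linarith, h2⟩
  obtain ⟨y, _, hy⟩ := intermediate_value_Icc (by linarith : (0:ℝ) ≤ v)
    (Real.continuous_cosh.continuousOn (s := Icc 0 v)) hmem
  exact ⟨y, hy⟩

/-- The key step: local boundedness of `x ↦ A (sinh x) - cosh x * A x` for additive `A`
forces `A (u * v) - v * A u` to be linear in `u` for every `v > 1`. -/
lemma aux_step1 (A : ℝ → ℝ) (hA : ∀ x y, A (x + y) = A x + A y)
    (hg : ∀ x₀ : ℝ, ∃ C, ∀ᶠ x in nhds x₀, |A (Real.sinh x) - Real.cosh x * A x| ≤ C)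
    (v : ℝ) (hv : 1 < v) :
    ∀ u : ℝ, A (u * v) = v * A u + (A v - v * A 1) * u := by
  obtain ⟨y₀, hy₀⟩ := aux_exists_cosh_eq hv
  subst hy₀
  set g : ℝ → ℝ := fun x => A (Real.sinh x) - Real.cosh x * A x with hgdef
  obtain ⟨C₁, hC₁⟩ := hg y₀
  obtain ⟨C₂, hC₂⟩ := hg (-y₀)
  obtain ⟨C₃, hC₃⟩ := hg 0
  have t1 : Tendsto (fun x : ℝ => x + y₀) (nhds 0) (nhds y₀) := by
    simpa using (continuous_add_right y₀).tendsto (0:ℝ)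
  have t2 : Tendsto (fun x : ℝ => x - y₀) (nhds 0) (nhds (-y₀)) := by
    simpa using (continuous_sub_right y₀).tendsto (0:ℝ)
  have hev : ∀ᶠ x in nhds (0:ℝ), |g (x + y₀)| ≤ C₁ ∧ |g (x - y₀)| ≤ C₂ ∧ |g x| ≤ C₃ :=
    (t1.eventually hC₁).and ((t2.eventually hC₂).and hC₃)
  rw [Metric.eventually_nhds_iff] at hev
  obtain ⟨δ, hδ, hball⟩ := hev
  have hAsub : ∀ x y, A (x - y) = A x - A y := by
    intro x y
    have h := hA (x - y) y
    rw [sub_add_cancel] at h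
    linarith
  have key' : ∀ x : ℝ, |x| < δ →
      |A (Real.sinh x * Real.cosh y₀) - Real.cosh y₀ * A (Real.sinh x)
        - (Real.sinh y₀ * A y₀) * Real.sinh x| ≤ (C₁ + C₂)/2 + |Real.cosh y₀| * C₃ := by
    intro x hx
    obtain ⟨b1, b2, b3⟩ := hball (by simpa [Real.dist_eq] using hx)
    have e1 : g (x + y₀) = A (Real.sinh x * Real.cosh y₀ + Real.cosh x * Real.sinh y₀)
        - (Real.cosh x * Real.cosh y₀ + Real.sinh x * Real.sinh y₀) * (A x + A y₀) := by
      simp only [hgdef, Real.sinh_add, Real.cosh_add, hA]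
    have e2 : g (x - y₀) = A (Real.sinh x * Real.cosh y₀ - Real.cosh x * Real.sinh y₀)
        - (Real.cosh x * Real.cosh y₀ - Real.sinh x * Real.sinh y₀) * (A x - A y₀) := by
      simp only [hgdef, Real.sinh_sub, Real.cosh_sub, hAsub]
    have e3 : A (Real.sinh x * Real.cosh y₀ + Real.cosh x * Real.sinh y₀)
        + A (Real.sinh x * Real.cosh y₀ - Real.cosh x * Real.sinh y₀)
        = 2 * A (Real.sinh x * Real.cosh y₀) := by
      rw [← hA]
      rw [show Real.sinh x * Real.cosh y₀ + Real.cosh x * Real.sinh y₀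
          + (Real.sinh x * Real.cosh y₀ - Real.cosh x * Real.sinh y₀)
          = Real.sinh x * Real.cosh y₀ + Real.sinh x * Real.cosh y₀ by ring]
      rw [hA]; ring
    have e4 : Real.cosh x * A x = A (Real.sinh x) - g x := by
      simp only [hgdef]; ring
    have main : A (Real.sinh x * Real.cosh y₀) - Real.cosh y₀ * A (Real.sinh x)
        - (Real.sinh y₀ * A y₀) * Real.sinh x
        = (g (x + y₀) + g (x - y₀))/2 - Real.cosh y₀ * g x := by
      linear_combination (-1/2 : ℝ) * e1 + (-1/2 : ℝ) * e2 + (-1/2 : ℝ) * e3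
        + Real.cosh y₀ * e4
    rw [main]
    calc |(g (x + y₀) + g (x - y₀))/2 - Real.cosh y₀ * g x|
        ≤ |(g (x + y₀) + g (x - y₀))/2| + |Real.cosh y₀ * g x| := abs_sub _ _
      _ ≤ (C₁ + C₂)/2 + |Real.cosh y₀| * C₃ := by
          rw [abs_mul, abs_div]
          have : |g (x + y₀) + g (x - y₀)| ≤ C₁ + C₂ := (abs_add_le _ _).trans (by linarith)
          have h2 : |(2:ℝ)| = 2 := by norm_num
          rw [h2]
          gcongr
  have hDadd : ∀ a b : ℝ, (fun u => A (u * Real.cosh y₀) - Real.cosh y₀ * A u) (a + b)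
      = (fun u => A (u * Real.cosh y₀) - Real.cosh y₀ * A u) a
        + (fun u => A (u * Real.cosh y₀) - Real.cosh y₀ * A u) b := by
    intro a b
    simp only
    rw [show (a + b) * Real.cosh y₀ = a * Real.cosh y₀ + b * Real.cosh y₀ by ring, hA, hA]
    ring
  have hδ' : 0 < Real.sinh δ := by
    rw [← Real.sinh_zero]
    exact Real.sinh_lt_sinh.mpr hδ
  have hlin := aux_additive_linear_of_bdd _ hDadd (Real.sinh y₀ * A y₀)
    ((C₁ + C₂)/2 + |Real.cosh y₀| * C₃) (Real.sinh δ) hδ'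
    (by
      intro u hu
      have hx : |Real.arsinh u| < δ := by
        rw [abs_lt] at hu ⊢
        constructor
        · rw [← Real.arsinh_sinh (-δ), Real.sinh_neg]
          exact Real.arsinh_lt_arsinh.mpr hu.1
        · rw [← Real.arsinh_sinh δ]
          exact Real.arsinh_lt_arsinh.mpr hu.2
      have := key' (Real.arsinh u) hx
      rwa [Real.sinh_arsinh] at this)
  intro u
  have h1 := hlin u
  rw [one_mul] at h1
  linarith [h1]

/-- Extending the product formula from `v > 1` to all reals. -/
lemma aux_step2 (A : ℝ → ℝ) (hA : ∀ x y, A (x + y) = A x + A y)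
    (h1 : ∀ v : ℝ, 1 < v → ∀ u : ℝ, A (u * v) = v * A u + (A v - v * A 1) * u) :
    ∀ u w : ℝ, A (u * w) = u * A w + w * A u - A 1 * (u * w) := by
  have hT0 : ∀ v : ℝ, 1 < v → ∀ u : ℝ,
      A (u * v) - v * A u - u * A v + A 1 * (u * v) = 0 := by
    intro v hv u
    rw [h1 v hv u]; ring
  intro u w
  obtain ⟨n, hn⟩ := exists_nat_gt (max 1 (1 - w))
  have hn1 : (1:ℝ) < n := lt_of_le_of_lt (le_max_left _ _) hn
  have hn2 : (1:ℝ) < w + n := by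
    have := lt_of_le_of_lt (le_max_right _ _) hn
    linarith
  have hTadd : A (u * (w + n)) - (w + n) * A u - u * A (w + n) + A 1 * (u * (w + n))
      = (A (u * w) - w * A u - u * A w + A 1 * (u * w))
        + (A (u * n) - n * A u - u * A n + A 1 * (u * n)) := by
    rw [show u * (w + (n:ℝ)) = u * w + u * n by ring, hA, hA w n]
    ring
  have z1 := hT0 _ hn2 u
  have z2 := hT0 _ hn1 u
  rw [z1] at hTadd
  linarith [hTadd, z2]

theorem stmt_16 (ε : ℝ) (hε : 0 < ε) (f : ℝ → ℝ)
    (hf : ∀ x y : ℝ, |f (x + y) - f x - f y| ≤ ε)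
    (hlb : LocallyBoundedOn (fun x : ℝ => f (Real.sinh x) - Real.cosh x * f x) Set.univ) :
    ∃ (l : ℝ) (χ : ℝ → ℝ), IsRealDerivation χ ∧
      ∀ x : ℝ, |f x - (χ x + l * x)| ≤ ε := by
  obtain ⟨A, hA, hclose⟩ := aux_hyers ε f hf
  have hg : ∀ x₀ : ℝ, ∃ C, ∀ᶠ x in nhds x₀, |A (Real.sinh x) - Real.cosh x * A x| ≤ C := by
    intro x₀
    obtain ⟨C, hC⟩ := hlb x₀ (mem_univ x₀)
    rw [nhdsWithin_univ] at hC
    refine ⟨C + ε + (Real.cosh x₀ + 1) * ε, ?_⟩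
    have hcosh : ∀ᶠ x in nhds x₀, Real.cosh x < Real.cosh x₀ + 1 :=
      (Real.continuous_cosh.tendsto x₀).eventually_lt_const (by linarith)
    filter_upwards [hC, hcosh] with x h1 h2
    have idt : A (Real.sinh x) - Real.cosh x * A x =
        (f (Real.sinh x) - Real.cosh x * f x) - (f (Real.sinh x) - A (Real.sinh x))
          + Real.cosh x * (f x - A x) := by ring
    have b1 : |f (Real.sinh x) - A (Real.sinh x)| ≤ ε := hclose _
    have b2 : |f x - A x| ≤ ε := hclose _
    have hcpos : (0:ℝ) ≤ Real.cosh x := (Real.cosh_pos x).le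
    rw [idt]
    calc |f (Real.sinh x) - Real.cosh x * f x - (f (Real.sinh x) - A (Real.sinh x))
          + Real.cosh x * (f x - A x)|
        ≤ |f (Real.sinh x) - Real.cosh x * f x - (f (Real.sinh x) - A (Real.sinh x))|
          + |Real.cosh x * (f x - A x)| := abs_add_le _ _
      _ ≤ (|f (Real.sinh x) - Real.cosh x * f x| + |f (Real.sinh x) - A (Real.sinh x)|)
          + Real.cosh x * |f x - A x| := by
          gcongr ?_ + ?_
          · exact abs_sub _ _
          · rw [abs_mul, abs_of_nonneg hcpos]
      _ ≤ C + ε + (Real.cosh x₀ + 1) * ε := by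
          have : Real.cosh x * |f x - A x| ≤ (Real.cosh x₀ + 1) * ε := by
            have hb : (0:ℝ) ≤ |f x - A x| := abs_nonneg _
            nlinarith
          linarith
  have hprod := aux_step2 A hA (aux_step1 A hA hg)
  refine ⟨A 1, fun x => A x - A 1 * x, ⟨?_, ?_⟩, ?_⟩
  · intro x y; simp only; rw [hA]; ring
  · intro x y; simp only; rw [hprod x y]; ring
  · intro x
    have e : A x - A 1 * x + A 1 * x = A x := by ring
    rw [e]
    exact hclose x
end
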